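/- Let ℓ be an odd prime and ε ∈ {+1,-1}. Then |{A ∈ GL₂(𝔽_ℓ) : χ(det A) = ε and det(I - A) ≠ 0}| = ½ℓ(ℓ-1)²(ℓ+1) - ((ℓ-1)/2)(ℓ²+ℓ) + ½(1+ε)ℓ, where χ is the quadratic (Legendre) character on 𝔽_ℓ^×. -/

import Mathlib

open Finset

set_option linter.unusedSectionVars false

variable {F : Type*} [Field F] [Fintype F] [DecidableEq F]

lemma sum_if_eq_const (a : F) (X Y : ℚ) :
    ∑ x : F, (if x = a then X else Y) = X + ((Fintype.card F : ℚ) - 1) * Y := by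
  have : ∀ x : F, (if x = a then X else Y) = Y + (if x = a then X - Y else 0) := by
    intro x; split <;> ring
  rw [Finset.sum_congr rfl (fun x _ => this x), Finset.sum_add_distrib,
    Finset.sum_ite_eq' univ a (fun _ => X - Y)]
  simp [Finset.card_univ]; ring

lemma sum_if_eq_zero (a : F) (g : F → ℚ) :
    ∑ x : F, (if x = a then 0 else g x) = (∑ x : F, g x) - g a := by
  have : ∀ x : F, (if x = a then 0 else g x) = g x - (if x = a then g a else 0) := by
    intro x; split_ifs with h
    · rw [h]; ring
    · ring
  rw [Finset.sum_congr rfl (fun x _ => this x), Finset.sum_sub_distrib,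
    Finset.sum_ite_eq' univ a (fun _ => g a), if_pos (mem_univ a)]

lemma card_filter_q (P : F × F → Prop) [DecidablePred P] :
    ((univ.filter P).card : ℚ) = ∑ a : F, ∑ b : F, (if P (a, b) then (1:ℚ) else 0) := by
  rw [Finset.card_filter]
  push_cast
  rw [Fintype.sum_prod_type]

lemma card_mul_eq_pairs (t : F) :
    ((univ.filter (fun p : F × F => p.1 * p.2 = t)).card : ℚ) =
      if t = 0 then 2 * (Fintype.card F : ℚ) - 1 else (Fintype.card F : ℚ) - 1 := by
  rw [card_filter_q]
  have hinner : ∀ a : F, (∑ b : F, if a * b = t then (1:ℚ) else 0)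
      = if a = 0 then (if t = 0 then (Fintype.card F : ℚ) else 0) else 1 := by
    intro a
    rcases eq_or_ne a 0 with rfl | ha
    · simp only [if_pos rfl, zero_mul]
      rcases eq_or_ne t 0 with rfl | ht
      · simp [Finset.card_univ]
      · simp [ht, (show (0:F) ≠ t from fun h => ht h.symm)]
    · rw [if_neg ha]
      have : ∀ b : F, (a * b = t) ↔ (b = a⁻¹ * t) := by
        intro b
        constructor
        · rintro rfl; field_simp
        · rintro rfl; field_simp
      simp only [this]
      rw [Finset.sum_ite_eq' univ (a⁻¹ * t) (fun _ => (1:ℚ))]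
      simp
  rw [Finset.sum_congr rfl (fun a _ => hinner a), sum_if_eq_const]
  split <;> ring

lemma card_S (d : F) (hd : d ≠ 0) :
    ((univ.filter (fun x : (F × F) × (F × F) =>
        x.1.1 * x.1.2 - x.2.1 * x.2.2 = d ∧ 1 + d - x.1.1 - x.1.2 ≠ 0)).card : ℚ) =
      (Fintype.card F : ℚ)^3 - (Fintype.card F : ℚ)^2 - 2 * (Fintype.card F : ℚ)
        + if d = 1 then (Fintype.card F : ℚ) else 0 := by
  set q : ℚ := (Fintype.card F : ℚ) with hq
  rw [Finset.card_filter]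
  push_cast
  rw [Fintype.sum_prod_type]
  -- inner: over second pair (b,c)
  have hbc : ∀ p : F × F, (∑ r : F × F, if (p.1 * p.2 - r.1 * r.2 = d ∧ 1 + d - p.1 - p.2 ≠ 0)
      then (1:ℚ) else 0)
      = if p.2 = 1 + d - p.1 then 0 else (if p.1 * p.2 - d = 0 then 2*q - 1 else q - 1) := by
    intro p
    rcases eq_or_ne p.2 (1 + d - p.1) with h | h
    · rw [if_pos h]
      apply Finset.sum_eq_zero
      intro r _
      rw [if_neg]
      rintro ⟨-, h2⟩
      apply h2
      rw [h]; ring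
    · rw [if_neg h]
      have hcond : (1:F) + d - p.1 - p.2 ≠ 0 := by
        intro h2; apply h; linear_combination -h2
      have : ∀ r : F × F, ((p.1 * p.2 - r.1 * r.2 = d ∧ 1 + d - p.1 - p.2 ≠ 0))
          ↔ (r.1 * r.2 = p.1 * p.2 - d) := by
        intro r
        constructor
        · rintro ⟨h1, -⟩; linear_combination -h1
        · intro h1; exact ⟨by linear_combination -h1, hcond⟩
      simp only [this]
      have := card_mul_eq_pairs (F := F) (p.1 * p.2 - d)
      rw [Finset.card_filter] at this
      push_cast at this
      rw [← this]
  rw [Finset.sum_congr rfl (fun p _ => hbc p), Fintype.sum_prod_type]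
  -- now sum over (a, e)
  have hinner : ∀ a : F, (∑ e : F, if e = 1 + d - a then 0
        else (if a * e - d = 0 then 2*q - 1 else q - 1))
      = (if a = 0 then q * (q-1) else q^2)
        - (if a = 1 ∨ a = d then 2*q - 1 else q - 1) := by
    intro a
    rw [sum_if_eq_zero (1 + d - a) (fun e => if a * e - d = 0 then 2*q - 1 else q - 1)]
    congr 1
    · -- total sum
      rcases eq_or_ne a 0 with rfl | ha
      · rw [if_pos rfl]
        have : ∀ e : F, (if (0:F) * e - d = 0 then 2*q-1 else q-1) = q - 1 := by
          intro e; rw [if_neg (by simpa using sub_ne_zero_of_ne (Ne.symm hd))]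
        rw [Finset.sum_congr rfl (fun e _ => this e), Finset.sum_const, Finset.card_univ]
        push_cast [hq]; ring
      · rw [if_neg ha]
        have : ∀ e : F, (a * e - d = 0) ↔ (e = a⁻¹ * d) := by
          intro e
          rw [sub_eq_zero]
          constructor
          · rintro rfl; field_simp
          · rintro rfl; field_simp
        simp only [this]
        rw [sum_if_eq_const (a⁻¹ * d) (2*q-1) (q-1), ← hq]
        ring
    · -- correction term
      congr 1
      rw [show a * (1 + d - a) - d = -((a - 1) * (a - d)) by ring]
      rw [neg_eq_zero, mul_eq_zero, sub_eq_zero, sub_eq_zero]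
  rw [Finset.sum_congr rfl (fun a _ => hinner a), Finset.sum_sub_distrib,
    sum_if_eq_const 0 (q * (q-1)) (q^2)]
  have hfil : univ.filter (fun a : F => a = 1 ∨ a = d) = {1, d} := by
    ext a; simp
  have hcard1 : ((({1, d} : Finset F).card : ℚ)) = if d = 1 then 1 else 2 := by
    rcases eq_or_ne d 1 with rfl | h
    · simp
    · rw [Finset.card_insert_of_notMem (by simp [Ne.symm h]), Finset.card_singleton,
        if_neg h]
      norm_num
  have hcard2 : ((univ.filter (fun a : F => ¬(a = 1 ∨ a = d))).card : ℚ)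
      = q - (if d = 1 then 1 else 2) := by
    have h := Finset.card_filter_add_card_filter_not (s := (univ : Finset F))
      (p := fun a : F => a = 1 ∨ a = d)
    rw [hfil, Finset.card_univ] at h
    have h' : (({1, d} : Finset F).card : ℚ)
        + ((univ.filter (fun a : F => ¬(a = 1 ∨ a = d))).card : ℚ) = q := by
      rw [hq]; exact_mod_cast congrArg (Nat.cast : ℕ → ℚ) h
    rw [hcard1] at h'
    linarith
  have hsplit : (∑ a : F, if a = 1 ∨ a = d then 2*q - 1 else q - 1)
      = q * (q - 1) + (if d = 1 then q else 2 * q) := by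
    rw [Finset.sum_ite, Finset.sum_const, Finset.sum_const, hfil, nsmul_eq_mul, nsmul_eq_mul,
      hcard1]
    have := hcard2
    push_cast at this ⊢
    rw [this]
    rcases eq_or_ne d 1 with rfl | h
    · simp only [if_true]; ring
    · rw [if_neg h, if_neg h]; ring
  rw [hsplit]
  have hq1 : (1:ℚ) ≤ q := by rw [hq]; exact_mod_cast Fintype.card_pos
  rcases eq_or_ne d 1 with rfl | hd1
  · rw [if_pos rfl, if_pos rfl]; ring
  · rw [if_neg hd1, if_neg hd1]; ring

lemma card_chi_eq (hF : ringChar F ≠ 2) (ε : ℤ) (hε : ε = 1 ∨ ε = -1) :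
    ((univ.filter (fun d : F => quadraticChar F d = ε)).card : ℚ)
      = ((Fintype.card F : ℚ) - 1) / 2 := by
  set n1 := (univ.filter (fun d : F => quadraticChar F d = 1)).card with hn1
  set n2 := (univ.filter (fun d : F => quadraticChar F d = -1)).card with hn2
  have hdich : ∀ d : F, quadraticChar F d = 0 ∨ quadraticChar F d = 1
      ∨ quadraticChar F d = -1 := by
    intro d
    rcases quadraticChar_isQuadratic F d with h | h | h
    · exact Or.inl h
    · exact Or.inr (Or.inl h)
    · exact Or.inr (Or.inr h)
  have hsum : (n1 : ℤ) - n2 = 0 := by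
    have h0 := quadraticChar_sum_zero (F := F) hF
    have hpt : ∀ d : F, (quadraticChar F d : ℤ)
        = (if quadraticChar F d = 1 then (1:ℤ) else 0)
          - (if quadraticChar F d = -1 then (1:ℤ) else 0) := by
      intro d
      rcases hdich d with h | h | h <;> rw [h] <;> norm_num
    rw [Finset.sum_congr rfl (fun d _ => hpt d), Finset.sum_sub_distrib,
      Finset.sum_boole, Finset.sum_boole, ← hn1, ← hn2] at h0
    simpa using h0
  have hunion : (n1 : ℤ) + n2 = Fintype.card F - 1 := by
    have h1 : univ.filter (fun d : F => quadraticChar F d = 1 ∨ quadraticChar F d = -1)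
        = univ.filter (fun d : F => d ≠ 0) := by
      apply Finset.filter_congr
      intro d _
      constructor
      · rintro (h | h) h0 <;> rw [h0] at h <;> simp [quadraticChar_zero] at h
      · intro h0
        rcases hdich d with h | h | h
        · exact absurd (quadraticChar_eq_zero_iff.mp h) h0
        · exact Or.inl h
        · exact Or.inr h
    have h2 : (univ.filter (fun d : F => d ≠ 0)).card = Fintype.card F - 1 := by
      rw [Finset.filter_ne' univ 0, Finset.card_erase_of_mem (mem_univ 0), Finset.card_univ]
    have h3 := Finset.card_union_of_disjoint (s := univ.filter (fun d : F => quadraticChar F d = 1))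
      (t := univ.filter (fun d : F => quadraticChar F d = -1))
      (by
        rw [Finset.disjoint_filter]
        intro d _ h h'
        rw [h] at h'; norm_num at h')
    rw [← Finset.filter_or, h1, h2] at h3
    have hq1 : (1:ℕ) ≤ Fintype.card F := Fintype.card_pos
    omega
  have key : (n1 : ℚ) = ((Fintype.card F : ℚ) - 1) / 2
      ∧ (n2 : ℚ) = ((Fintype.card F : ℚ) - 1) / 2 := by
    have e1 : (n1 : ℚ) - n2 = 0 := by exact_mod_cast congrArg (Int.cast : ℤ → ℚ) hsum
    have e2 : (n1 : ℚ) + n2 = (Fintype.card F : ℚ) - 1 := by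
      have := congrArg (Int.cast : ℤ → ℚ) hunion
      push_cast at this
      exact this
    constructor <;> linarith
  rcases hε with rfl | rfl
  · exact key.1
  · exact key.2

/-- For an odd prime `ℓ` and `ε ∈ {±1}`, the number of `A ∈ GL₂(𝔽_ℓ)` with
`χ(det A) = ε` and `det(I - A) ≠ 0` (where `χ` is the quadratic character of `𝔽_ℓ`)
equals `½ℓ(ℓ-1)²(ℓ+1) - ((ℓ-1)/2)(ℓ²+ℓ) + ½(1+ε)ℓ`. -/
theorem stmt_5 (ℓ : ℕ) [Fact ℓ.Prime] (hodd : ℓ ≠ 2) (ε : ℤ) (hε : ε = 1 ∨ ε = -1) :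
    (Nat.card {A : Matrix (Fin 2) (Fin 2) (ZMod ℓ) //
        IsUnit A ∧ quadraticChar (ZMod ℓ) A.det = ε ∧ (1 - A).det ≠ 0} : ℚ) =
      (ℓ : ℚ) * ((ℓ : ℚ) - 1) ^ 2 * ((ℓ : ℚ) + 1) / 2
        - (((ℓ : ℚ) - 1) / 2) * ((ℓ : ℚ) ^ 2 + ℓ)
        + (1 + (ε : ℚ)) * ℓ / 2 := by
  haveI : NeZero ℓ := ⟨(Fact.out (p := ℓ.Prime)).ne_zero⟩
  set F := ZMod ℓ
  have hchar : ringChar F ≠ 2 := by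
    rw [ZMod.ringChar_zmod_n]; exact hodd
  have hε0 : ε ≠ 0 := by rcases hε with rfl | rfl <;> norm_num
  -- the equiv between matrices and pairs of pairs
  let i : Matrix (Fin 2) (Fin 2) F ≃ (F × F) × (F × F) :=
    { toFun := fun A => ((A 0 0, A 1 1), (A 0 1, A 1 0))
      invFun := fun x => !![x.1.1, x.2.1; x.2.2, x.1.2]
      left_inv := fun A => by
        rw [Matrix.eta_fin_two A]
        simp
      right_inv := fun x => by
        simp }
  set P' : (F × F) × (F × F) → Prop := fun x =>
    quadraticChar F (x.1.1 * x.1.2 - x.2.1 * x.2.2) = ε ∧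
      (1 - x.1.1) * (1 - x.1.2) - x.2.1 * x.2.2 ≠ 0 with hP'
  have hiff : ∀ A : Matrix (Fin 2) (Fin 2) F,
      (IsUnit A ∧ quadraticChar F A.det = ε ∧ (1 - A).det ≠ 0) ↔ P' (i A) := by
    intro A
    have hdet : A.det = A 0 0 * A 1 1 - A 0 1 * A 1 0 := Matrix.det_fin_two A
    have hdet1 : (1 - A).det = (1 - A 0 0) * (1 - A 1 1) - A 0 1 * A 1 0 := by
      rw [Matrix.det_fin_two]
      simp [Matrix.sub_apply, Matrix.one_apply]
      try ring
    simp only [hP', i, Equiv.coe_fn_mk, hdet, hdet1]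
    constructor
    · rintro ⟨-, h1, h2⟩; exact ⟨h1, h2⟩
    · rintro ⟨h1, h2⟩
      refine ⟨?_, h1, h2⟩
      rw [Matrix.isUnit_iff_isUnit_det, isUnit_iff_ne_zero, hdet]
      intro h0
      rw [h0] at h1
      rw [quadraticChar_zero] at h1
      exact hε0 h1.symm
  have hcard : Nat.card {A : Matrix (Fin 2) (Fin 2) F //
        IsUnit A ∧ quadraticChar F A.det = ε ∧ (1 - A).det ≠ 0}
      = (univ.filter P').card := by
    rw [Nat.card_congr (Equiv.subtypeEquiv i hiff), Nat.card_eq_fintype_card,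
      Fintype.card_subtype]
  rw [hcard]
  set q : ℚ := (ℓ : ℚ) with hqdef
  have hqF : (Fintype.card F : ℚ) = q := by rw [ZMod.card]
  -- fiberwise over determinant
  have hfib := Finset.card_eq_sum_card_fiberwise
    (f := fun x : (F × F) × (F × F) => x.1.1 * x.1.2 - x.2.1 * x.2.2)
    (s := univ.filter P') (t := univ) (fun x _ => mem_univ _)
  have hfiber : ∀ d : F, (((univ.filter P').filter
        (fun x : (F × F) × (F × F) => x.1.1 * x.1.2 - x.2.1 * x.2.2 = d)).card : ℚ)
      = if quadraticChar F d = ε then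
          (q^3 - q^2 - 2*q + if d = 1 then q else 0) else 0 := by
    intro d
    rcases eq_or_ne (quadraticChar F d) ε with h | h
    · rw [if_pos h]
      have hd0 : d ≠ 0 := by
        rintro rfl
        rw [quadraticChar_zero] at h
        exact hε0 h.symm
      have hset : (univ.filter P').filter
            (fun x : (F × F) × (F × F) => x.1.1 * x.1.2 - x.2.1 * x.2.2 = d)
          = univ.filter (fun x : (F × F) × (F × F) =>
              x.1.1 * x.1.2 - x.2.1 * x.2.2 = d ∧ 1 + d - x.1.1 - x.1.2 ≠ 0) := by
        rw [Finset.filter_filter]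
        apply Finset.filter_congr
        rintro x -
        simp only [hP']
        constructor
        · rintro ⟨⟨-, h2⟩, h3⟩
          refine ⟨h3, fun h4 => h2 ?_⟩
          linear_combination h3 + h4
        · rintro ⟨h3, h4⟩
          exact ⟨⟨by rw [h3, h], fun h5 => h4 (by linear_combination h5 - h3)⟩, h3⟩
      rw [hset, card_S d hd0, hqF]
    · rw [if_neg h]
      norm_cast
      rw [Finset.card_eq_zero, Finset.eq_empty_iff_forall_notMem]
      rintro x hx
      rw [Finset.mem_filter, Finset.mem_filter] at hx
      exact h (by rw [← hx.2]; exact hx.1.2.1)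
  have hN : (((univ.filter P').card : ℚ))
      = (q^3 - q^2 - 2*q) * ((q - 1)/2) + (if ε = 1 then q else 0) := by
    rw [hfib]
    push_cast
    rw [Finset.sum_congr rfl (fun d _ => hfiber d)]
    have hsplit : ∀ d : F, (if quadraticChar F d = ε then
          (q^3 - q^2 - 2*q + if d = 1 then q else 0) else 0)
        = (if quadraticChar F d = ε then (q^3 - q^2 - 2*q) else 0)
          + (if quadraticChar F d = ε then (if d = 1 then q else 0) else 0) := by
      intro d
      rcases eq_or_ne (quadraticChar F d) ε with h | h
      · simp only [if_pos h]
      · simp only [if_neg h]; ring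
    rw [Finset.sum_congr rfl (fun d _ => hsplit d), Finset.sum_add_distrib]
    congr 1
    · rw [← Finset.sum_filter, Finset.sum_const, nsmul_eq_mul,
        card_chi_eq hchar ε hε, hqF]
      ring
    · rcases hε with rfl | rfl
      · rw [if_pos rfl]
        have hpt : ∀ d : F, (if quadraticChar F d = 1 then (if d = 1 then q else 0) else 0)
            = (if d = 1 then q else 0) := by
          intro d
          rcases eq_or_ne d 1 with rfl | hd
          · simp
          · simp [hd]
        rw [Finset.sum_congr rfl (fun d _ => hpt d),
          Finset.sum_ite_eq' univ (1:F) (fun _ => q)]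
        simp
      · rw [if_neg (by norm_num)]
        apply Finset.sum_eq_zero
        rintro d -
        rcases eq_or_ne d 1 with rfl | hd
        · rw [if_neg (by rw [map_one]; norm_num)]
        · simp [hd]
  rw [hN]
  rcases hε with rfl | rfl
  · rw [if_pos rfl]; push_cast; ring
  · rw [if_neg (by norm_num)]; push_cast; ring
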